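/- Define the cutoff i*(w) as the least integer price i ∈ {1,...,I} such that i > f(w), where f(0) = 0 and f(w+1) = Σ_{j ≥ i*(w+1)'} p_j·j + f(w)·Σ_{j < i*(w+1)'} p_j is the hold value (with optimal cutoff at each stage), prices are 1,...,I with probabilities p_j > 0 summing to 1. Then i*(0) = 1, and i*(w) is monotone nondecreasing in w. -/

import Mathlib

open Finset

/-- With the optimally-updated hold value `f` and the cutoff `i*(w)` defined as the least
price `i ∈ {1,...,I}` with `i > f(w)`, we have `i*(0) = 1` and `i*` is monotone
nondecreasing in the window size `w`. -/
theorem stmt_6 (I : ℕ) (hI : 1 ≤ I) (p : ℕ → ℝ) (hp : ∀ j ∈ Icc 1 I, 0 < p j)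
    (hsum : ∑ j ∈ Icc 1 I, p j = 1)
    (f : ℕ → ℝ) (hf0 : f 0 = 0)
    (hfrec : ∀ w, f (w + 1) =
      (Icc 1 I).sup' (Finset.nonempty_Icc.mpr hI)
        (fun k => ∑ j ∈ Icc k I, p j * j + f w * ∑ j ∈ Icc 1 (k - 1), p j))
    (istar : ℕ → ℕ)
    (histar : ∀ w, IsLeast {i : ℕ | 1 ≤ i ∧ i ≤ I ∧ f w < (i : ℝ)} (istar w)) :
    istar 0 = 1 ∧ Monotone istar := by
  -- nonnegativity of f at successors
  have hpnn : ∀ j ∈ Icc 1 I, (0:ℝ) ≤ p j := fun j hj => (hp j hj).le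
  have hsucc_nn : ∀ w, (0:ℝ) ≤ f (w + 1) := by
    intro w
    rw [hfrec w]
    have h1 : 1 ∈ Icc 1 I := mem_Icc.mpr ⟨le_refl 1, hI⟩
    refine le_trans ?_ (Finset.le_sup' _ h1)
    simp only [Nat.sub_self, Icc_self]
    have : Icc 1 (1 - 1) = (∅ : Finset ℕ) := by decide
    rw [this]
    simp only [Finset.sum_empty, mul_zero, add_zero]
    refine Finset.sum_nonneg fun j hj => mul_nonneg (hpnn j hj) (Nat.cast_nonneg j)
  -- f is monotone (nondecreasing step)
  have hstep : ∀ w, f w ≤ f (w + 1) := by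
    intro w
    induction w with
    | zero => rw [hf0]; exact hsucc_nn 0
    | succ n ih =>
      rw [hfrec n, hfrec (n + 1)]
      refine Finset.sup'_mono_fun fun k hk => ?_
      refine add_le_add (le_refl _) (mul_le_mul_of_nonneg_right ih ?_)
      refine Finset.sum_nonneg fun j hj => hpnn j ?_
      have hj' := mem_Icc.mp hj
      have hk' := mem_Icc.mp hk
      exact mem_Icc.mpr ⟨hj'.1, le_trans hj'.2 (le_trans (Nat.sub_le k 1) hk'.2)⟩
  have hfmono : Monotone f := monotone_nat_of_le_succ hstep
  constructor
  · -- istar 0 = 1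
    have h1 : 1 ∈ {i : ℕ | 1 ≤ i ∧ i ≤ I ∧ f 0 < (i : ℝ)} := by
      refine ⟨le_refl 1, hI, ?_⟩
      rw [hf0]; norm_num
    exact le_antisymm ((histar 0).2 h1) (histar 0).1.1
  · -- Monotone istar
    refine monotone_nat_of_le_succ fun w => ?_
    obtain ⟨h1, h2, h3⟩ := (histar (w + 1)).1
    exact (histar w).2 ⟨h1, h2, lt_of_le_of_lt (hstep w) h3⟩
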